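/- A finite simple graph G is 2K_2-split if and only if G is isomorphic to the disjoint union P_2 ∪ C_3 or to the disjoint union P_2 ∪ P_3. -/
import Mathlib

open SimpleGraph

/-- The contraction `G/uv` of the edge between `u` and `v`: the vertex `v` is deleted
and merged into `u`, whose new neighbourhood is `(N(u) ∪ N(v)) \\ {u, v}`. -/
def SimpleGraph.contractEdge {V : Type*} (G : SimpleGraph V) (u v : V) :
    SimpleGraph {x : V // x ≠ v} :=
  SimpleGraph.fromRel fun a b => G.Adj a.1 b.1 ∨ (a.1 = u ∧ G.Adj v b.1)

instance {n : ℕ} : DecidableRel (pathGraph n).Adj :=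
  fun _ _ => decidable_of_iff' _ pathGraph_adj

instance {n : ℕ} : DecidableRel (cycleGraph n).Adj :=
  fun _ _ => decidable_of_iff' _ cycleGraph_adj'

instance sumAdjDec' {α β} {G : SimpleGraph α} {H : SimpleGraph β} [DecidableRel G.Adj]
    [DecidableRel H.Adj] : DecidableRel (G ⊕g H).Adj
  | Sum.inl a, Sum.inl b => decidable_of_iff' (G.Adj a b) (by simp)
  | Sum.inl _, Sum.inr _ => .isFalse (by simp)
  | Sum.inr _, Sum.inl _ => .isFalse (by simp)
  | Sum.inr a, Sum.inr b => decidable_of_iff' (H.Adj a b) (by simp)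

lemma contract_adj' {V : Type*} (G : SimpleGraph V) (u v : V) (a b : {x : V // x ≠ v}) :
    (G.contractEdge u v).Adj a b ↔ a.1 ≠ b.1 ∧
      (G.Adj a.1 b.1 ∨ (a.1 = u ∧ G.Adj v b.1) ∨ (b.1 = u ∧ G.Adj v a.1)) := by
  rw [SimpleGraph.contractEdge, SimpleGraph.fromRel_adj]
  constructor
  · rintro ⟨hne, h⟩
    refine ⟨fun h' => hne (Subtype.ext h'), ?_⟩
    rcases h with (h|h)|(h|h)
    · exact Or.inl h
    · exact Or.inr (Or.inl h)
    · exact Or.inl h.symm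
    · exact Or.inr (Or.inr h)
  · rintro ⟨hne, h⟩
    refine ⟨fun h' => hne (congrArg Subtype.val h'), ?_⟩
    rcases h with h|h|h
    · exact Or.inl (Or.inl h)
    · exact Or.inl (Or.inr h)
    · exact Or.inr (Or.inr h)

lemma build_C3 {V : Type*} (G : SimpleGraph V) (t0 t1 t2 q0 q1 : V)
    (hall : ∀ x : V, x = q0 ∨ x = q1 ∨ x = t0 ∨ x = t1 ∨ x = t2)
    (hq : G.Adj q0 q1)
    (ht01 : G.Adj t0 t1) (ht12 : G.Adj t1 t2) (ht02 : G.Adj t0 t2)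
    (n00 : ¬G.Adj t0 q0) (n01 : ¬G.Adj t0 q1)
    (n10 : ¬G.Adj t1 q0) (n11 : ¬G.Adj t1 q1)
    (n20 : ¬G.Adj t2 q0) (n21 : ¬G.Adj t2 q1) :
    Nonempty (G ≃g (pathGraph 2 ⊕g cycleGraph 3)) := by
  have dq : q0 ≠ q1 := hq.ne
  have d00 : t0 ≠ q0 := by rintro rfl; exact n01 hq
  have d01 : t0 ≠ q1 := by rintro rfl; exact n00 hq.symm
  have d10 : t1 ≠ q0 := by rintro rfl; exact n11 hq
  have d11 : t1 ≠ q1 := by rintro rfl; exact n10 hq.symm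
  have d20 : t2 ≠ q0 := by rintro rfl; exact n21 hq
  have d21 : t2 ≠ q1 := by rintro rfl; exact n20 hq.symm
  have dt01 : t0 ≠ t1 := ht01.ne
  have dt12 : t1 ≠ t2 := ht12.ne
  have dt02 : t0 ≠ t2 := ht02.ne
  have hq' := hq.symm
  have ht01' := ht01.symm
  have ht12' := ht12.symm
  have ht02' := ht02.symm
  have n00' : ¬G.Adj q0 t0 := fun h => n00 h.symm
  have n01' : ¬G.Adj q1 t0 := fun h => n01 h.symm
  have n10' : ¬G.Adj q0 t1 := fun h => n10 h.symm
  have n11' : ¬G.Adj q1 t1 := fun h => n11 h.symm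
  have n20' : ¬G.Adj q0 t2 := fun h => n20 h.symm
  have n21' : ¬G.Adj q1 t2 := fun h => n21 h.symm
  have i0 : ¬G.Adj q0 q0 := G.irrefl
  have i1 : ¬G.Adj q1 q1 := G.irrefl
  have i2 : ¬G.Adj t0 t0 := G.irrefl
  have i3 : ¬G.Adj t1 t1 := G.irrefl
  have i4 : ¬G.Adj t2 t2 := G.irrefl
  have hbij : Function.Bijective (Sum.elim ![q0, q1] ![t0, t1, t2] : Fin 2 ⊕ Fin 3 → V) := by
    constructor
    · rintro (x|x) (y|y) h <;> fin_cases x <;> fin_cases y <;>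
        simp only [Sum.elim_inl, Sum.elim_inr, Matrix.cons_val_zero, Matrix.cons_val_one,
          Matrix.head_cons, Matrix.cons_val_two, Matrix.tail_cons] at h <;>
        first
          | rfl
          | exact absurd h (by assumption)
          | exact absurd h.symm (by assumption)
    · intro y
      rcases hall y with rfl|rfl|rfl|rfl|rfl
      exacts [⟨Sum.inl 0, rfl⟩, ⟨Sum.inl 1, rfl⟩, ⟨Sum.inr 0, rfl⟩, ⟨Sum.inr 1, rfl⟩,
        ⟨Sum.inr 2, rfl⟩]
  refine ⟨(RelIso.mk (Equiv.ofBijective _ hbij) ?_).symm⟩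
  rintro (x|x) (y|y) <;> fin_cases x <;> fin_cases y <;>
    simp only [Equiv.ofBijective_apply, Sum.elim_inl, Sum.elim_inr, Matrix.cons_val_zero,
      Matrix.cons_val_one, Matrix.head_cons, Matrix.cons_val_two, Matrix.tail_cons] <;>
    first
      | exact iff_of_true (by assumption) (by decide)
      | exact iff_of_false (by assumption) (by decide)

lemma build_P3 {V : Type*} (G : SimpleGraph V) (p0 p1 p2 q0 q1 : V)
    (hall : ∀ x : V, x = q0 ∨ x = q1 ∨ x = p0 ∨ x = p1 ∨ x = p2)
    (hq : G.Adj q0 q1)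
    (hp01 : G.Adj p0 p1) (hp12 : G.Adj p1 p2)
    (np02 : ¬G.Adj p0 p2) (dp02 : p0 ≠ p2)
    (n00 : ¬G.Adj p0 q0) (n01 : ¬G.Adj p0 q1)
    (n10 : ¬G.Adj p1 q0) (n11 : ¬G.Adj p1 q1)
    (n20 : ¬G.Adj p2 q0) (n21 : ¬G.Adj p2 q1) :
    Nonempty (G ≃g (pathGraph 2 ⊕g pathGraph 3)) := by
  have dq : q0 ≠ q1 := hq.ne
  have d00 : p0 ≠ q0 := by rintro rfl; exact n01 hq
  have d01 : p0 ≠ q1 := by rintro rfl; exact n00 hq.symm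
  have d10 : p1 ≠ q0 := by rintro rfl; exact n11 hq
  have d11 : p1 ≠ q1 := by rintro rfl; exact n10 hq.symm
  have d20 : p2 ≠ q0 := by rintro rfl; exact n21 hq
  have d21 : p2 ≠ q1 := by rintro rfl; exact n20 hq.symm
  have dp01 : p0 ≠ p1 := hp01.ne
  have dp12 : p1 ≠ p2 := hp12.ne
  have hq' := hq.symm
  have hp01' := hp01.symm
  have hp12' := hp12.symm
  have np02' : ¬G.Adj p2 p0 := fun h => np02 h.symm
  have n00' : ¬G.Adj q0 p0 := fun h => n00 h.symm
  have n01' : ¬G.Adj q1 p0 := fun h => n01 h.symm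
  have n10' : ¬G.Adj q0 p1 := fun h => n10 h.symm
  have n11' : ¬G.Adj q1 p1 := fun h => n11 h.symm
  have n20' : ¬G.Adj q0 p2 := fun h => n20 h.symm
  have n21' : ¬G.Adj q1 p2 := fun h => n21 h.symm
  have i0 : ¬G.Adj q0 q0 := G.irrefl
  have i1 : ¬G.Adj q1 q1 := G.irrefl
  have i2 : ¬G.Adj p0 p0 := G.irrefl
  have i3 : ¬G.Adj p1 p1 := G.irrefl
  have i4 : ¬G.Adj p2 p2 := G.irrefl
  have hbij : Function.Bijective (Sum.elim ![q0, q1] ![p0, p1, p2] : Fin 2 ⊕ Fin 3 → V) := by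
    constructor
    · rintro (x|x) (y|y) h <;> fin_cases x <;> fin_cases y <;>
        simp only [Sum.elim_inl, Sum.elim_inr, Matrix.cons_val_zero, Matrix.cons_val_one,
          Matrix.head_cons, Matrix.cons_val_two, Matrix.tail_cons] at h <;>
        first
          | rfl
          | exact absurd h (by assumption)
          | exact absurd h.symm (by assumption)
    · intro y
      rcases hall y with rfl|rfl|rfl|rfl|rfl
      exacts [⟨Sum.inl 0, rfl⟩, ⟨Sum.inl 1, rfl⟩, ⟨Sum.inr 0, rfl⟩, ⟨Sum.inr 1, rfl⟩,
        ⟨Sum.inr 2, rfl⟩]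
  refine ⟨(RelIso.mk (Equiv.ofBijective _ hbij) ?_).symm⟩
  rintro (x|x) (y|y) <;> fin_cases x <;> fin_cases y <;>
    simp only [Equiv.ofBijective_apply, Sum.elim_inl, Sum.elim_inr, Matrix.cons_val_zero,
      Matrix.cons_val_one, Matrix.head_cons, Matrix.cons_val_two, Matrix.tail_cons] <;>
    first
      | exact iff_of_true (by assumption) (by decide)
      | exact iff_of_false (by assumption) (by decide)

set_option maxHeartbeats 1600000 in
lemma build_2K2 {V : Type*} (G : SimpleGraph V) (u v w q0 q1 : V)
    (hall : ∀ x : V, x = q0 ∨ x = q1 ∨ x = u ∨ x = v ∨ x = w)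
    (huv : G.Adj u v) (hw : G.Adj u w ∨ G.Adj v w)
    (hwu : w ≠ u) (hwv : w ≠ v)
    (hq : G.Adj q0 q1)
    (nuq0 : ¬G.Adj u q0) (nuq1 : ¬G.Adj u q1)
    (nvq0 : ¬G.Adj v q0) (nvq1 : ¬G.Adj v q1)
    (nwq0 : ¬G.Adj w q0) (nwq1 : ¬G.Adj w q1) :
    Nonempty ((pathGraph 2 ⊕g pathGraph 2) ≃g G.contractEdge u v) := by
  have dq : q0 ≠ q1 := hq.ne
  have duv : u ≠ v := huv.ne
  have duw : u ≠ w := fun h => hwu h.symm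
  have dq0u : q0 ≠ u := by rintro rfl; exact nvq0 huv.symm
  have dq0v : q0 ≠ v := by rintro rfl; exact nuq0 huv
  have dq1u : q1 ≠ u := by rintro rfl; exact nvq1 huv.symm
  have dq1v : q1 ≠ v := by rintro rfl; exact nuq1 huv
  have dq0w : q0 ≠ w := by rintro rfl; rcases hw with h|h; exacts [nuq0 h, nvq0 h]
  have dq1w : q1 ≠ w := by rintro rfl; rcases hw with h|h; exacts [nuq1 h, nvq1 h]
  have hq' := hq.symm
  have hw' : G.Adj w u ∨ G.Adj v w := by rcases hw with h|h; exacts [Or.inl h.symm, Or.inr h]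
  have nuq0' : ¬G.Adj q0 u := fun h => nuq0 h.symm
  have nuq1' : ¬G.Adj q1 u := fun h => nuq1 h.symm
  have nvq0' : ¬G.Adj q0 v := fun h => nvq0 h.symm
  have nvq1' : ¬G.Adj q1 v := fun h => nvq1 h.symm
  have nwq0' : ¬G.Adj q0 w := fun h => nwq0 h.symm
  have nwq1' : ¬G.Adj q1 w := fun h => nwq1 h.symm
  have dq' := dq.symm
  have dq0u' := dq0u.symm
  have dq1u' := dq1u.symm
  have dq0w' := dq0w.symm
  have dq1w' := dq1w.symm
  have hbij : Function.Bijective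
      (Sum.elim ![⟨q0, dq0v⟩, ⟨q1, dq1v⟩] ![⟨u, duv⟩, ⟨w, hwv⟩] :
        Fin 2 ⊕ Fin 2 → {x : V // x ≠ v}) := by
    constructor
    · rintro (x|x) (y|y) h <;> fin_cases x <;> fin_cases y <;>
        simp only [Sum.elim_inl, Sum.elim_inr, Matrix.cons_val_zero, Matrix.cons_val_one,
          Matrix.head_cons, Fin.mk_zero, Fin.mk_one, Subtype.mk.injEq] at h <;>
        first
          | rfl
          | exact absurd h (by assumption)
          | exact absurd h.symm (by assumption)
    · intro y
      rcases hall y.1 with h|h|h|h|h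
      · exact ⟨Sum.inl 0, Subtype.ext h.symm⟩
      · exact ⟨Sum.inl 1, Subtype.ext h.symm⟩
      · exact ⟨Sum.inr 0, Subtype.ext h.symm⟩
      · exact absurd h y.2
      · exact ⟨Sum.inr 1, Subtype.ext h.symm⟩
  refine ⟨RelIso.mk (Equiv.ofBijective _ hbij) ?_⟩
  rintro (x|x) (y|y) <;> fin_cases x <;> fin_cases y <;>
    simp only [Equiv.ofBijective_apply, Sum.elim_inl, Sum.elim_inr, Matrix.cons_val_zero,
      Matrix.cons_val_one, Matrix.head_cons, Fin.mk_zero, Fin.mk_one] <;>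
    rw [contract_adj'] <;> (try dsimp only) <;>
    first
      | (refine iff_of_true ?_ (by decide); tauto)
      | (refine iff_of_false ?_ (by decide); tauto)

set_option maxHeartbeats 2000000 in
lemma aux_forward {V : Type*} (G : SimpleGraph V) (u v : V) (huv : G.Adj u v)
    (e : (pathGraph 2 ⊕g pathGraph 2) ≃g G.contractEdge u v)
    (x0 x1 x2 x3 : Fin 2 ⊕ Fin 2)
    (hall : ∀ y : Fin 2 ⊕ Fin 2, y = x0 ∨ y = x1 ∨ y = x2 ∨ y = x3)
    (h01 : (pathGraph 2 ⊕g pathGraph 2).Adj x0 x1)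
    (h23 : (pathGraph 2 ⊕g pathGraph 2).Adj x2 x3)
    (h02 : ¬(pathGraph 2 ⊕g pathGraph 2).Adj x0 x2)
    (h03 : ¬(pathGraph 2 ⊕g pathGraph 2).Adj x0 x3)
    (h12 : ¬(pathGraph 2 ⊕g pathGraph 2).Adj x1 x2)
    (h13 : ¬(pathGraph 2 ⊕g pathGraph 2).Adj x1 x3)
    (hu : e x0 = ⟨u, huv.ne⟩) :
    Nonempty (G ≃g (pathGraph 2 ⊕g cycleGraph 3)) ∨
      Nonempty (G ≃g (pathGraph 2 ⊕g pathGraph 3)) := by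
  obtain ⟨⟨a, hav⟩, hA⟩ : ∃ t, e x1 = t := ⟨_, rfl⟩
  obtain ⟨⟨b, hbv⟩, hB⟩ : ∃ t, e x2 = t := ⟨_, rfl⟩
  obtain ⟨⟨c, hcv⟩, hC⟩ : ∃ t, e x3 = t := ⟨_, rfl⟩
  have dx02 : x0 ≠ x2 := by rintro rfl; exact h03 h23
  have dx03 : x0 ≠ x3 := by rintro rfl; exact h02 h23.symm
  have dx12 : x1 ≠ x2 := by rintro rfl; exact h13 h23
  have dx13 : x1 ≠ x3 := by rintro rfl; exact h12 h23.symm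
  have einj : Function.Injective e := e.toEquiv.injective
  have hau : a ≠ u := fun h => h01.ne (einj (hu.trans (Subtype.ext h.symm) |>.trans hA.symm))
  have hbu : b ≠ u := fun h => dx02 (einj (hu.trans (Subtype.ext h.symm) |>.trans hB.symm))
  have hcu : c ≠ u := fun h => dx03 (einj (hu.trans (Subtype.ext h.symm) |>.trans hC.symm))
  have hab : a ≠ b := fun h => dx12 (einj (hA.trans (Subtype.ext h) |>.trans hB.symm))
  have hac : a ≠ c := fun h => dx13 (einj (hA.trans (Subtype.ext h) |>.trans hC.symm))
  -- adjacency extraction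
  have F01 := (contract_adj' G u v _ _).1 (e.map_rel_iff.2 h01)
  rw [hu, hA] at F01
  have F23 := (contract_adj' G u v _ _).1 (e.map_rel_iff.2 h23)
  rw [hB, hC] at F23
  dsimp only at F01 F23
  have hUA : G.Adj u a ∨ G.Adj v a := by
    rcases F01.2 with h|h|h
    exacts [Or.inl h, Or.inr h.2, absurd h.1 hau]
  have hBC : G.Adj b c := by
    rcases F23.2 with h|h|h
    exacts [h, absurd h.1 hbu, absurd h.1 hcu]
  have keyn : ∀ {y z : Fin 2 ⊕ Fin 2}, ¬(pathGraph 2 ⊕g pathGraph 2).Adj y z →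
      ¬(G.contractEdge u v).Adj (e y) (e z) := fun h h' => h (e.map_rel_iff.1 h')
  have nUB : ¬G.Adj u b := fun h => keyn h02 (by
    rw [hu, hB, contract_adj']
    exact ⟨fun hh => hbu hh.symm, Or.inl h⟩)
  have nVB : ¬G.Adj v b := fun h => keyn h02 (by
    rw [hu, hB, contract_adj']
    exact ⟨fun hh => hbu hh.symm, Or.inr (Or.inl ⟨rfl, h⟩)⟩)
  have nUC : ¬G.Adj u c := fun h => keyn h03 (by
    rw [hu, hC, contract_adj']
    exact ⟨fun hh => hcu hh.symm, Or.inl h⟩)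
  have nVC : ¬G.Adj v c := fun h => keyn h03 (by
    rw [hu, hC, contract_adj']
    exact ⟨fun hh => hcu hh.symm, Or.inr (Or.inl ⟨rfl, h⟩)⟩)
  have nAB : ¬G.Adj a b := fun h => keyn h12 (by
    rw [hA, hB, contract_adj']
    exact ⟨hab, Or.inl h⟩)
  have nAC : ¬G.Adj a c := fun h => keyn h13 (by
    rw [hA, hC, contract_adj']
    exact ⟨hac, Or.inl h⟩)
  have hallV : ∀ x : V, x = b ∨ x = c ∨ x = u ∨ x = v ∨ x = a := by
    intro x
    by_cases hx : x = v
    · exact Or.inr (Or.inr (Or.inr (Or.inl hx)))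
    · have h5 := e.apply_symm_apply ⟨x, hx⟩
      rcases hall (e.symm ⟨x, hx⟩) with h|h|h|h <;> rw [h] at h5
      · exact Or.inr (Or.inr (Or.inl
          (congrArg Subtype.val ((hu.symm.trans h5))).symm))
      · exact Or.inr (Or.inr (Or.inr (Or.inr
          (congrArg Subtype.val ((hA.symm.trans h5))).symm)))
      · exact Or.inl (congrArg Subtype.val ((hB.symm.trans h5))).symm
      · exact Or.inr (Or.inl (congrArg Subtype.val ((hC.symm.trans h5))).symm)
  by_cases hGua : G.Adj u a <;> by_cases hGva : G.Adj v a
  · exact Or.inl (build_C3 G u v a b c hallV hBC huv hGva hGua nUB nUC nVB nVC nAB nAC)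
  · refine Or.inr (build_P3 G a u v b c (fun x => by rcases hallV x with h|h|h|h|h <;> tauto)
      hBC hGua.symm huv (fun h => hGva h.symm) hav nAB nAC nUB nUC nVB nVC)
  · refine Or.inr (build_P3 G a v u b c (fun x => by rcases hallV x with h|h|h|h|h <;> tauto)
      hBC hGva.symm huv.symm (fun h => hGua h.symm) hau nAB nAC nVB nVC nUB nUC)
  · rcases hUA with h|h
    exacts [absurd h hGua, absurd h hGva]

set_option maxHeartbeats 1000000 in
theorem stmt15 {V : Type*} [Fintype V] (G : SimpleGraph V) :
    (∃ u v, G.Adj u v ∧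
        Nonempty ((pathGraph 2 ⊕g pathGraph 2) ≃g G.contractEdge u v)) ↔
      (Nonempty (G ≃g (pathGraph 2 ⊕g cycleGraph 3)) ∨
        Nonempty (G ≃g (pathGraph 2 ⊕g pathGraph 3))) := by
  constructor
  · rintro ⟨u, v, huv, ⟨e⟩⟩
    obtain ⟨y, hy⟩ : ∃ y, e y = ⟨u, huv.ne⟩ := ⟨_, e.apply_symm_apply _⟩
    rcases y with i|i <;> fin_cases i
    · exact aux_forward G u v huv e (Sum.inl 0) (Sum.inl 1) (Sum.inr 0) (Sum.inr 1)
        (by decide) (by decide) (by decide) (by decide) (by decide) (by decide) (by decide) hy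
    · exact aux_forward G u v huv e (Sum.inl 1) (Sum.inl 0) (Sum.inr 0) (Sum.inr 1)
        (by decide) (by decide) (by decide) (by decide) (by decide) (by decide) (by decide) hy
    · exact aux_forward G u v huv e (Sum.inr 0) (Sum.inr 1) (Sum.inl 0) (Sum.inl 1)
        (by decide) (by decide) (by decide) (by decide) (by decide) (by decide) (by decide) hy
    · exact aux_forward G u v huv e (Sum.inr 1) (Sum.inr 0) (Sum.inl 0) (Sum.inl 1)
        (by decide) (by decide) (by decide) (by decide) (by decide) (by decide) (by decide) hy
  · rintro (h|h) <;> obtain ⟨φ⟩ := h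
    · set ψ := φ.symm with hψ
      have key : ∀ p q : Fin 2 ⊕ Fin 3, (pathGraph 2 ⊕g cycleGraph 3).Adj p q →
          G.Adj (ψ p) (ψ q) := fun p q h => ψ.map_rel_iff.2 h
      have keyn : ∀ p q : Fin 2 ⊕ Fin 3, ¬(pathGraph 2 ⊕g cycleGraph 3).Adj p q →
          ¬G.Adj (ψ p) (ψ q) := fun p q h hh => h (ψ.map_rel_iff.1 hh)
      have dkey : ∀ p q : Fin 2 ⊕ Fin 3, p ≠ q → ψ p ≠ ψ q :=
        fun p q h hh => h (ψ.toEquiv.injective hh)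
      have hallV : ∀ x : V, x = ψ (Sum.inl 0) ∨ x = ψ (Sum.inl 1) ∨ x = ψ (Sum.inr 0) ∨
          x = ψ (Sum.inr 1) ∨ x = ψ (Sum.inr 2) := by
        intro x
        have h5 : ∀ z : Fin 2 ⊕ Fin 3, z = Sum.inl 0 ∨ z = Sum.inl 1 ∨ z = Sum.inr 0 ∨
            z = Sum.inr 1 ∨ z = Sum.inr 2 := by decide
        have hx : ψ (ψ.symm x) = x := ψ.apply_symm_apply x
        rcases h5 (ψ.symm x) with h|h|h|h|h <;> rw [h] at hx <;> tauto
      refine ⟨ψ (Sum.inr 0), ψ (Sum.inr 1), key _ _ (by decide), ?_⟩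
      exact build_2K2 G (ψ (Sum.inr 0)) (ψ (Sum.inr 1)) (ψ (Sum.inr 2)) (ψ (Sum.inl 0))
        (ψ (Sum.inl 1)) hallV (key _ _ (by decide)) (Or.inl (key _ _ (by decide)))
        (dkey _ _ (by decide)) (dkey _ _ (by decide)) (key _ _ (by decide))
        (keyn _ _ (by decide)) (keyn _ _ (by decide)) (keyn _ _ (by decide))
        (keyn _ _ (by decide)) (keyn _ _ (by decide)) (keyn _ _ (by decide))
    · set ψ := φ.symm with hψ
      have key : ∀ p q : Fin 2 ⊕ Fin 3, (pathGraph 2 ⊕g pathGraph 3).Adj p q →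
          G.Adj (ψ p) (ψ q) := fun p q h => ψ.map_rel_iff.2 h
      have keyn : ∀ p q : Fin 2 ⊕ Fin 3, ¬(pathGraph 2 ⊕g pathGraph 3).Adj p q →
          ¬G.Adj (ψ p) (ψ q) := fun p q h hh => h (ψ.map_rel_iff.1 hh)
      have dkey : ∀ p q : Fin 2 ⊕ Fin 3, p ≠ q → ψ p ≠ ψ q :=
        fun p q h hh => h (ψ.toEquiv.injective hh)
      have hallV : ∀ x : V, x = ψ (Sum.inl 0) ∨ x = ψ (Sum.inl 1) ∨ x = ψ (Sum.inr 1) ∨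
          x = ψ (Sum.inr 2) ∨ x = ψ (Sum.inr 0) := by
        intro x
        have h5 : ∀ z : Fin 2 ⊕ Fin 3, z = Sum.inl 0 ∨ z = Sum.inl 1 ∨ z = Sum.inr 0 ∨
            z = Sum.inr 1 ∨ z = Sum.inr 2 := by decide
        have hx : ψ (ψ.symm x) = x := ψ.apply_symm_apply x
        rcases h5 (ψ.symm x) with h|h|h|h|h <;> rw [h] at hx <;> tauto
      refine ⟨ψ (Sum.inr 1), ψ (Sum.inr 2), key _ _ (by decide), ?_⟩
      exact build_2K2 G (ψ (Sum.inr 1)) (ψ (Sum.inr 2)) (ψ (Sum.inr 0)) (ψ (Sum.inl 0))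
        (ψ (Sum.inl 1)) hallV (key _ _ (by decide)) (Or.inl (key _ _ (by decide)))
        (dkey _ _ (by decide)) (dkey _ _ (by decide)) (key _ _ (by decide))
        (keyn _ _ (by decide)) (keyn _ _ (by decide)) (keyn _ _ (by decide))
        (keyn _ _ (by decide)) (keyn _ _ (by decide)) (keyn _ _ (by decide))
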